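/- If M is a bi-intuitionistic model of finite depth n and Σ is a finite set of L-formulas with |Σ| = s, then the number of equivalence classes of the greatest Σ-bisimulation ∼_Σ on M is at most 2^{2(n+1)s}_{n+2}, where 2^m_k is the iterated exponential defined by 2^m_0 = m and 2^m_{k+1} = 2^{(2^m_k)}. -/

import Mathlib

universe u

/-- Formulas of the intuitionistic modal language `L`, with a countably infinite
set of propositional variables indexed by `ℕ`. -/
inductive Fml : Type where
  | var : ℕ → Fml
  | bot : Fml
  | and : Fml → Fml → Fml
  | or : Fml → Fml → Fml
  | imp : Fml → Fml → Fml
  | dia : Fml → Fml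
  | box : Fml → Fml
  deriving DecidableEq

/-- A birelational structure: a set of worlds, a set of fallible worlds, an
intuitionistic relation `le` (`≼`), a modal relation `sq` (`⊑`) and a valuation. -/
structure KModel : Type (u + 1) where
  W : Type u
  fallible : Set W
  le : W → W → Prop
  sq : W → W → Prop
  val : ℕ → Set W

namespace KModel

/-- The satisfaction relation. -/
def Sat (M : KModel.{u}) : Fml → M.W → Prop
  | .var p, w => w ∈ M.val p
  | .bot, w => w ∈ M.fallible
  | .and φ ψ, w => Sat M φ w ∧ Sat M ψ w
  | .or φ ψ, w => Sat M φ w ∨ Sat M ψ w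
  | .imp φ ψ, w => ∀ v, M.le w v → Sat M φ v → Sat M ψ v
  | .dia φ, w => ∀ u, M.le w u → ∃ v, M.sq u v ∧ Sat M φ v
  | .box φ, w => ∀ u v, M.le w u → M.sq u v → Sat M φ v

/-- `M` is a bi-intuitionistic model: both relations are preorders, the set of
fallible worlds is closed under both relations, and the valuation is
`≼`-monotone and contains the fallible worlds. -/
def IsBiInt (M : KModel.{u}) : Prop :=
  (∀ w, M.le w w) ∧ (∀ u v w, M.le u v → M.le v w → M.le u w) ∧
  (∀ w, M.sq w w) ∧ (∀ u v w, M.sq u v → M.sq v w → M.sq u w) ∧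
  (∀ w v, w ∈ M.fallible → M.le w v → v ∈ M.fallible) ∧
  (∀ w v, w ∈ M.fallible → M.sq w v → v ∈ M.fallible) ∧
  (∀ p w v, w ∈ M.val p → M.le w v → v ∈ M.val p) ∧
  (∀ p w, w ∈ M.fallible → w ∈ M.val p)

/-- `⊑` is forth–up confluent for `≼`. -/
def ForthUp (M : KModel.{u}) : Prop :=
  ∀ w w' v, M.le w w' → M.sq w v → ∃ v', M.le v v' ∧ M.sq w' v'

/-- `⊑` is back–up confluent for `≼`. -/
def BackUp (M : KModel.{u}) : Prop :=
  ∀ w v v', M.sq w v → M.le v v' → ∃ w', M.le w w' ∧ M.sq w' v'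

/-- `⊑` is forth–down confluent for `≼`. -/
def ForthDown (M : KModel.{u}) : Prop :=
  ∀ w v v', M.le w v → M.sq v v' → ∃ w', M.sq w w' ∧ M.le w' v'

/-- `≼` is upward linear. -/
def UpLinear (M : KModel.{u}) : Prop :=
  ∀ w u v, M.le w u → M.le w v → M.le u v ∨ M.le v u

/-- There are no fallible worlds. -/
def Infallible (M : KModel.{u}) : Prop := M.fallible = ∅

/-- CS4 frames: back–up confluent bi-intuitionistic frames. -/
def IsCS4 (M : KModel.{u}) : Prop := M.IsBiInt ∧ M.BackUp

/-- IS4 frames: forth–up confluent infallible CS4 frames. -/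
def IsIS4 (M : KModel.{u}) : Prop := M.IsCS4 ∧ M.ForthUp ∧ M.Infallible

/-- GS4 frames: upward-linear IS4 frames. -/
def IsGS4 (M : KModel.{u}) : Prop := M.IsIS4 ∧ M.UpLinear

/-- GS4c frames: forth–down confluent GS4 frames. -/
def IsGS4c (M : KModel.{u}) : Prop := M.IsGS4 ∧ M.ForthDown

/-- S4I frames: forth–up and forth–down confluent infallible bi-intuitionistic frames. -/
def IsS4I (M : KModel.{u}) : Prop :=
  M.IsBiInt ∧ M.ForthUp ∧ M.ForthDown ∧ M.Infallible

end KModel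

namespace KModel

/-- The positive part `ℓ+(w)` of the `Σ`-label of a world. -/
def labelPlus (M : KModel.{u}) (S : Set Fml) (w : M.W) : Set Fml :=
  {φ | φ ∈ S ∧ M.Sat φ w}

/-- The part `ℓ◇(w)` of the `Σ`-label of a world: formulas of `Σ` satisfied at
no `⊑`-successor of `w`. -/
def labelDia (M : KModel.{u}) (S : Set Fml) (w : M.W) : Set Fml :=
  {φ | φ ∈ S ∧ ∀ v, M.sq w v → ¬ M.Sat φ v}

/-- `Z` is a `Σ`-bisimulation on `M`: it is forth–up and back–up confluent for
`≼` and preserves `Σ`-labels. -/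
def IsBisim (M : KModel.{u}) (S : Set Fml) (Z : M.W → M.W → Prop) : Prop :=
  (∀ w w' v, M.le w w' → Z w v → ∃ v', M.le v v' ∧ Z w' v') ∧
  (∀ w v v', Z w v → M.le v v' → ∃ w', M.le w w' ∧ Z w' v') ∧
  (∀ w v, Z w v →
    labelPlus M S w = labelPlus M S v ∧ labelDia M S w = labelDia M S v)

/-- The greatest `Σ`-bisimulation on `M`: the union of all `Σ`-bisimulations. -/
def GBisim (M : KModel.{u}) (S : Set Fml) (w v : M.W) : Prop :=
  ∃ Z, IsBisim M S Z ∧ Z w v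

/-- The quotient of a model by a relation `r` on its worlds: worlds are the
classes; a class is fallible iff it contains a fallible world; `[w] ≼ [v]` iff
`w' ≼ v'` for some `w' ∼ w`, `v' ∼ v`; the modal relation is the transitive
closure of the analogous relation; and `[w] ∈ V(p)` iff `w ∈ V(p)`. -/
def QuotModel (M : KModel.{u}) (r : M.W → M.W → Prop) : KModel.{u} where
  W := Quot r
  fallible := {x | ∃ w, Quot.mk r w = x ∧ w ∈ M.fallible}
  le := fun x y => ∃ w v, Quot.mk r w = x ∧ Quot.mk r v = y ∧ M.le w v
  sq := Relation.TransGen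
    (fun x y => ∃ w v, Quot.mk r w = x ∧ Quot.mk r v = y ∧ M.sq w v)
  val := fun p => {x | ∃ w, Quot.mk r w = x ∧ w ∈ M.val p}

end KModel

/-- A set of formulas closed under subformulas. -/
def SubClosed (S : Set Fml) : Prop :=
  (∀ φ ψ : Fml, φ.and ψ ∈ S → φ ∈ S ∧ ψ ∈ S) ∧
  (∀ φ ψ : Fml, φ.or ψ ∈ S → φ ∈ S ∧ ψ ∈ S) ∧
  (∀ φ ψ : Fml, φ.imp ψ ∈ S → φ ∈ S ∧ ψ ∈ S) ∧
  (∀ φ : Fml, φ.dia ∈ S → φ ∈ S) ∧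
  (∀ φ : Fml, φ.box ∈ S → φ ∈ S)

namespace KModel

/-- The strict order `w ≺ v`: `w ≼ v` but not `v ≼ w`. -/
def Slt (M : KModel.{u}) (w v : M.W) : Prop := M.le w v ∧ ¬ M.le v w

/-- The model has depth at most `n`: every chain `w₀ ≺ w₁ ≺ … ≺ w_m` has `m ≤ n`. -/
def DepthLE (M : KModel.{u}) (n : ℕ) : Prop :=
  ∀ (m : ℕ) (c : ℕ → M.W), (∀ i < m, M.Slt (c i) (c (i + 1))) → m ≤ n

/-- The model is shallow: its depth is finite. -/
def Shallow (M : KModel.{u}) : Prop := ∃ n : ℕ, M.DepthLE n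

/-- `≼` is downward linear. -/
def DownLinear (M : KModel.{u}) : Prop :=
  ∀ w u v, M.le u w → M.le v w → M.le u v ∨ M.le v u

/-- The model is forest-like: the set of `≼`-predecessors of any world is
totally ordered by `≼`. -/
def ForestLike (M : KModel.{u}) : Prop :=
  ∀ w u v, M.le u w → M.le v w → M.le u v ∨ M.le v u

end KModel

/-- The superexponential function: `iterExp m 0 = m` and
`iterExp m (k+1) = 2 ^ iterExp m k`. -/
def iterExp (m : ℕ) : ℕ → ℕ
  | 0 => m
  | k + 1 => 2 ^ iterExp m k

/- ------------------ auxiliary development ------------------ -/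

namespace BisimAux

open KModel

variable {M : KModel.{u}}

/-! ### Monotonicity of satisfaction -/

lemma sat_mono (hM : M.IsBiInt) (φ : Fml) :
    ∀ {w v : M.W}, M.le w v → M.Sat φ w → M.Sat φ v := by
  obtain ⟨hrefl, htrans, _, _, hfle, _, hval, _⟩ := hM
  induction φ with
  | var p => intro w v h hw; exact hval p w v hw h
  | bot => intro w v h hw; exact hfle w v hw h
  | and φ ψ ih1 ih2 =>
    intro w v h hw
    exact ⟨ih1 h hw.1, ih2 h hw.2⟩
  | or φ ψ ih1 ih2 =>
    intro w v h hw
    rcases hw with h1 | h1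
    · exact Or.inl (ih1 h h1)
    · exact Or.inr (ih2 h h1)
  | imp φ ψ ih1 ih2 =>
    intro w v h hw u hu hφ
    exact hw u (htrans _ _ _ h hu) hφ
  | dia φ ih =>
    intro w v h hw u hu
    exact hw u (htrans _ _ _ h hu)
  | box φ ih =>
    intro w v h hw u x hu hx
    exact hw u x (htrans _ _ _ h hu) hx

lemma labelPlus_sub (S : Set Fml) (w : M.W) : M.labelPlus S w ⊆ S :=
  fun _ h => h.1

lemma labelDia_sub (S : Set Fml) (w : M.W) : M.labelDia S w ⊆ S :=
  fun _ h => h.1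

lemma labelPlus_cluster (hM : M.IsBiInt) (S : Set Fml) {w v : M.W}
    (h1 : M.le w v) (h2 : M.le v w) : M.labelPlus S w = M.labelPlus S v := by
  ext φ
  exact and_congr_right fun _ => ⟨sat_mono hM φ h1, sat_mono hM φ h2⟩

/-! ### Heights -/

/-- The set of lengths of strictly increasing chains starting at `w`. -/
def hset (M : KModel.{u}) (w : M.W) : Set ℕ :=
  {m | ∃ c : ℕ → M.W, c 0 = w ∧ ∀ i < m, M.Slt (c i) (c (i + 1))}

/-- The height of a world: the longest strictly increasing chain starting there. -/
noncomputable def ht (M : KModel.{u}) (w : M.W) : ℕ := sSup (hset M w)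

lemma hset_zero (w : M.W) : 0 ∈ hset M w :=
  ⟨fun _ => w, rfl, fun i hi => absurd hi (Nat.not_lt_zero i)⟩

variable {n : ℕ}

lemma hset_le (hdepth : M.DepthLE n) (w : M.W) : ∀ m ∈ hset M w, m ≤ n := by
  rintro m ⟨c, _, hc⟩
  exact hdepth m c hc

lemma ht_le (hdepth : M.DepthLE n) (w : M.W) : ht M w ≤ n :=
  csSup_le ⟨0, hset_zero w⟩ (hset_le hdepth w)

lemma ht_mem (hdepth : M.DepthLE n) (w : M.W) : ht M w ∈ hset M w :=
  Nat.sSup_mem ⟨0, hset_zero w⟩ ⟨n, fun m hm => hset_le hdepth w m hm⟩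

lemma ht_lt (hdepth : M.DepthLE n) {w v : M.W} (h : M.Slt w v) :
    ht M v < ht M w := by
  obtain ⟨c, hc0, hc⟩ := ht_mem hdepth v
  have hmem : ht M v + 1 ∈ hset M w := by
    refine ⟨fun i => Nat.casesOn i w (fun j => c j), rfl, ?_⟩
    intro i hi
    cases i with
    | zero =>
      show M.Slt w (c 0)
      rw [hc0]; exact h
    | succ j =>
      exact hc j (by omega)
  exact Nat.lt_of_succ_le (le_csSup ⟨n, fun m hm => hset_le hdepth w m hm⟩ hmem)

/-! ### Iterated labels -/

/-- Codomain of the iterated-label map. -/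
def TT : ℕ → Type
  | 0 => PUnit
  | k + 1 => (Set Fml × Set Fml × Set (Set Fml)) × Set (TT k)

/-- The cluster labels of a world: the `ℓ◇`-labels of the worlds in its `≼`-cluster. -/
def clSet (M : KModel.{u}) (S : Set Fml) (w : M.W) : Set (Set Fml) :=
  {A | ∃ u, M.le w u ∧ M.le u w ∧ M.labelDia S u = A}

/-- The iterated label of a world. -/
def tau (M : KModel.{u}) (S : Set Fml) : (k : ℕ) → M.W → TT k
  | 0, _ => PUnit.unit
  | k + 1, w =>
    ((M.labelPlus S w, M.labelDia S w, clSet M S w),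
      {t : TT k | ∃ v, M.Slt w v ∧ tau M S k v = t})

lemma tau_succ_eq_iff {S : Set Fml} {k : ℕ} {w v : M.W} :
    tau M S (k + 1) w = tau M S (k + 1) v ↔
      (M.labelPlus S w = M.labelPlus S v ∧ M.labelDia S w = M.labelDia S v ∧
        clSet M S w = clSet M S v ∧
        {t : TT k | ∃ x, M.Slt w x ∧ tau M S k x = t} =
          {t : TT k | ∃ x, M.Slt v x ∧ tau M S k x = t}) := by
  show ((M.labelPlus S w, M.labelDia S w, clSet M S w),
      {t : TT k | ∃ x, M.Slt w x ∧ tau M S k x = t}) =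
    ((M.labelPlus S v, M.labelDia S v, clSet M S v),
      {t : TT k | ∃ x, M.Slt v x ∧ tau M S k x = t}) ↔ _
  simp only [Prod.mk.injEq]
  tauto

lemma clSet_cluster (hM : M.IsBiInt) (S : Set Fml) {w v : M.W}
    (h1 : M.le w v) (h2 : M.le v w) : clSet M S w = clSet M S v := by
  obtain ⟨_, htrans, _⟩ := hM
  ext A
  constructor
  · rintro ⟨u, hwu, huw, rfl⟩
    exact ⟨u, htrans _ _ _ h2 hwu, htrans _ _ _ huw h1, rfl⟩
  · rintro ⟨u, hvu, huv, rfl⟩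
    exact ⟨u, htrans _ _ _ h1 hvu, htrans _ _ _ huv h2, rfl⟩

lemma slt_cluster (hM : M.IsBiInt) {w v x : M.W}
    (h1 : M.le w v) (h2 : M.le v w) : M.Slt w x ↔ M.Slt v x := by
  obtain ⟨_, htrans, _⟩ := hM
  constructor
  · rintro ⟨hwx, hnxw⟩
    exact ⟨htrans _ _ _ h2 hwx, fun hxv => hnxw (htrans _ _ _ hxv h2)⟩
  · rintro ⟨hvx, hnxv⟩
    exact ⟨htrans _ _ _ h1 hvx, fun hxw => hnxv (htrans _ _ _ hxw h1)⟩

lemma tset_cluster (hM : M.IsBiInt) (S : Set Fml) (k : ℕ) {w v : M.W}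
    (h1 : M.le w v) (h2 : M.le v w) :
    {t : TT k | ∃ x, M.Slt w x ∧ tau M S k x = t} =
      {t : TT k | ∃ x, M.Slt v x ∧ tau M S k x = t} := by
  ext t
  constructor
  · rintro ⟨x, hx, rfl⟩
    exact ⟨x, (slt_cluster hM h1 h2).mp hx, rfl⟩
  · rintro ⟨x, hx, rfl⟩
    exact ⟨x, (slt_cluster hM h1 h2).mpr hx, rfl⟩

/-! ### Stabilization -/

lemma tau_stab (hdepth : M.DepthLE n) (S : Set Fml) :
    ∀ k : ℕ, ∀ w v : M.W, ht M w < k → ht M v < k →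
      tau M S k w = tau M S k v → tau M S (k + 1) w = tau M S (k + 1) v := by
  intro k
  induction k with
  | zero => intro w v hw; exact absurd hw (Nat.not_lt_zero _)
  | succ k ih =>
    intro w v hw hv heq
    rw [tau_succ_eq_iff] at heq
    obtain ⟨h1, h2, h3, h4⟩ := heq
    rw [tau_succ_eq_iff]
    refine ⟨h1, h2, h3, ?_⟩
    have key : ∀ a b : M.W, ht M a < k + 1 → ht M b < k + 1 →
        ({t : TT k | ∃ x, M.Slt a x ∧ tau M S k x = t} =
          {t : TT k | ∃ x, M.Slt b x ∧ tau M S k x = t}) →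
        {t : TT (k + 1) | ∃ x, M.Slt a x ∧ tau M S (k + 1) x = t} ⊆
          {t : TT (k + 1) | ∃ x, M.Slt b x ∧ tau M S (k + 1) x = t} := by
      rintro a b ha hb hs t ⟨x, hax, rfl⟩
      have hx : tau M S k x ∈ {t : TT k | ∃ x, M.Slt a x ∧ tau M S k x = t} :=
        ⟨x, hax, rfl⟩
      rw [hs] at hx
      obtain ⟨y, hby, hy⟩ := hx
      have hxk : ht M x < k := lt_of_lt_of_le (ht_lt hdepth hax) (Nat.lt_succ_iff.mp ha)
      have hyk : ht M y < k := lt_of_lt_of_le (ht_lt hdepth hby) (Nat.lt_succ_iff.mp hb)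
      exact ⟨y, hby, ih y x hyk hxk hy⟩
    exact Set.Subset.antisymm (key w v hw hv h4) (key v w hv hw h4.symm)

lemma tau_stab_ge (hdepth : M.DepthLE n) (S : Set Fml) {k j : ℕ} (hkj : k ≤ j)
    {w v : M.W} (hw : ht M w < k) (hv : ht M v < k)
    (h : tau M S k w = tau M S k v) : tau M S j w = tau M S j v := by
  induction j, hkj using Nat.le_induction with
  | base => exact h
  | succ j hkj ih =>
    exact tau_stab hdepth S j w v (lt_of_lt_of_le hw hkj) (lt_of_lt_of_le hv hkj) ih

/-! ### `τ`-equality is a bisimulation -/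

lemma tau_forth (hM : M.IsBiInt) (hdepth : M.DepthLE n) (S : Set Fml)
    {w w' v : M.W} (hle : M.le w w')
    (heq : tau M S (n + 1) w = tau M S (n + 1) v) :
    ∃ v', M.le v v' ∧ tau M S (n + 1) w' = tau M S (n + 1) v' := by
  rw [tau_succ_eq_iff] at heq
  obtain ⟨h1, h2, h3, h4⟩ := heq
  by_cases hba : M.le w' w
  · -- `w'` is in the cluster of `w`
    have hmem : M.labelDia S w' ∈ clSet M S w := ⟨w', hle, hba, rfl⟩
    rw [h3] at hmem
    obtain ⟨u, hvu, huv, hu⟩ := hmem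
    refine ⟨u, hvu, ?_⟩
    rw [tau_succ_eq_iff]
    refine ⟨?_, hu.symm, ?_, ?_⟩
    · calc M.labelPlus S w' = M.labelPlus S w := labelPlus_cluster hM S hba hle
        _ = M.labelPlus S v := h1
        _ = M.labelPlus S u := labelPlus_cluster hM S hvu huv
    · calc clSet M S w' = clSet M S w := clSet_cluster hM S hba hle
        _ = clSet M S v := h3
        _ = clSet M S u := clSet_cluster hM S hvu huv
    · calc {t : TT n | ∃ x, M.Slt w' x ∧ tau M S n x = t}
          = {t : TT n | ∃ x, M.Slt w x ∧ tau M S n x = t} :=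
            tset_cluster hM S n hba hle
        _ = {t : TT n | ∃ x, M.Slt v x ∧ tau M S n x = t} := h4
        _ = {t : TT n | ∃ x, M.Slt u x ∧ tau M S n x = t} :=
            tset_cluster hM S n hvu huv
  · have hslt : M.Slt w w' := ⟨hle, hba⟩
    have hmem : tau M S n w' ∈ {t : TT n | ∃ x, M.Slt w x ∧ tau M S n x = t} :=
      ⟨w', hslt, rfl⟩
    rw [h4] at hmem
    obtain ⟨v', hvv', hv'⟩ := hmem
    refine ⟨v', hvv'.1, ?_⟩
    have hw'n : ht M w' < n := lt_of_lt_of_le (ht_lt hdepth hslt) (ht_le hdepth w)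
    have hv'n : ht M v' < n := lt_of_lt_of_le (ht_lt hdepth hvv') (ht_le hdepth v)
    exact tau_stab_ge hdepth S (Nat.le_succ n) hw'n hv'n hv'.symm

lemma tau_isBisim (hM : M.IsBiInt) (hdepth : M.DepthLE n) (S : Set Fml) :
    M.IsBisim S (fun w v => tau M S (n + 1) w = tau M S (n + 1) v) := by
  refine ⟨?_, ?_, ?_⟩
  · intro w w' v hle hz
    exact tau_forth hM hdepth S hle hz
  · intro w v v' hz hle
    obtain ⟨w', h1, h2⟩ := tau_forth hM hdepth S hle hz.symm
    exact ⟨w', h1, h2.symm⟩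
  · intro w v hz
    rw [tau_succ_eq_iff] at hz
    exact ⟨hz.1, hz.2.1⟩

end BisimAux

namespace BisimAux

variable {M : KModel.{u}}

/-! ### Counting -/

/-- Boolean encoding of a subset of formulas relative to a finite set. -/
noncomputable def encS (Sf : Finset Fml) (X : Set Fml) : {φ // φ ∈ Sf} → Bool :=
  fun φ => @decide (↑φ ∈ X) (Classical.propDecidable _)

lemma encS_inj {Sf : Finset Fml} {X Y : Set Fml} (hX : X ⊆ ↑Sf) (hY : Y ⊆ ↑Sf)
    (h : encS Sf X = encS Sf Y) : X = Y := by
  ext φ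
  constructor
  · intro hφ
    have hφS : φ ∈ Sf := hX hφ
    exact (decide_eq_decide.mp (congrFun h ⟨φ, hφS⟩)).mp hφ
  · intro hφ
    have hφS : φ ∈ Sf := hY hφ
    exact (decide_eq_decide.mp (congrFun h ⟨φ, hφS⟩)).mpr hφ

/-- Boolean encoding of a set of subsets of formulas. -/
noncomputable def enc2 (Sf : Finset Fml) (C : Set (Set Fml)) :
    ({φ // φ ∈ Sf} → Bool) → Bool :=
  fun f => @decide (∃ X ∈ C, encS Sf X = f) (Classical.propDecidable _)

lemma enc2_inj {Sf : Finset Fml} {C D : Set (Set Fml)}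
    (hC : ∀ X ∈ C, X ⊆ ↑Sf) (hD : ∀ X ∈ D, X ⊆ ↑Sf)
    (h : enc2 Sf C = enc2 Sf D) : C = D := by
  ext X
  constructor
  · intro hX
    have h1 : ∃ Y ∈ C, encS Sf Y = encS Sf X := ⟨X, hX, rfl⟩
    have h2 := (decide_eq_decide.mp (congrFun h (encS Sf X))).mp h1
    obtain ⟨Y, hY, hYX⟩ := h2
    rwa [← encS_inj (hD Y hY) (hC X hX) hYX]
  · intro hX
    have h1 : ∃ Y ∈ D, encS Sf Y = encS Sf X := ⟨X, hX, rfl⟩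
    have h2 := (decide_eq_decide.mp (congrFun h (encS Sf X))).mpr h1
    obtain ⟨Y, hY, hYX⟩ := h2
    rwa [← encS_inj (hC Y hY) (hD X hX) hYX]

/-- The counting bound at each level. -/
def Bnd (s : ℕ) : ℕ → ℕ
  | 0 => 0
  | k + 1 => 2 ^ (2 * s + 2 ^ s + Bnd s k)

lemma clSet_sub (S : Set Fml) (w : M.W) : ∀ X ∈ clSet M S w, X ⊆ S := by
  rintro X ⟨u, _, _, rfl⟩
  exact labelDia_sub S u

lemma tau_count {n : ℕ} (hdepth : M.DepthLE n) (Sf : Finset Fml) :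
    ∀ k : ℕ, ∃ (A : Type) (_ : Fintype A) (g : {w : M.W // ht M w < k} → A),
      Fintype.card A ≤ Bnd Sf.card k ∧
      ∀ x y, (g x = g y ↔ tau M (↑Sf) k x.1 = tau M (↑Sf) k y.1) := by
  intro k
  induction k with
  | zero =>
    refine ⟨Fin 0, inferInstance, fun x => absurd x.2 (Nat.not_lt_zero _), ?_, ?_⟩
    · simp [Bnd]
    · intro x
      exact absurd x.2 (Nat.not_lt_zero _)
  | succ k ih =>
    obtain ⟨A, instA, g, hcard, hg⟩ := ih
    letI := instA
    letI : DecidableEq A := Classical.decEq A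
    refine ⟨(({φ // φ ∈ Sf} → Bool) × ({φ // φ ∈ Sf} → Bool) ×
        (({φ // φ ∈ Sf} → Bool) → Bool)) × (A → Bool), inferInstance,
      fun x => ((encS Sf (M.labelPlus (↑Sf) x.1), encS Sf (M.labelDia (↑Sf) x.1),
        enc2 Sf (clSet M (↑Sf) x.1)),
        fun a => @decide (∃ z : {w : M.W // ht M w < k}, M.Slt x.1 z.1 ∧ g z = a)
          (Classical.propDecidable _)), ?_, ?_⟩
    · -- cardinality bound
      have hc : Fintype.card ((({φ // φ ∈ Sf} → Bool) × ({φ // φ ∈ Sf} → Bool) ×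
          (({φ // φ ∈ Sf} → Bool) → Bool)) × (A → Bool)) =
          2 ^ Sf.card * (2 ^ Sf.card * 2 ^ 2 ^ Sf.card) * 2 ^ Fintype.card A := by
        simp [Fintype.card_fun, Fintype.card_coe]
      rw [hc]
      have h1 : 2 ^ Fintype.card A ≤ 2 ^ Bnd Sf.card k :=
        Nat.pow_le_pow_right (by norm_num) hcard
      calc 2 ^ Sf.card * (2 ^ Sf.card * 2 ^ 2 ^ Sf.card) * 2 ^ Fintype.card A
          ≤ 2 ^ Sf.card * (2 ^ Sf.card * 2 ^ 2 ^ Sf.card) * 2 ^ Bnd Sf.card k :=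
            Nat.mul_le_mul_left _ h1
        _ = 2 ^ (2 * Sf.card + 2 ^ Sf.card + Bnd Sf.card k) := by
            rw [show 2 * Sf.card + 2 ^ Sf.card + Bnd Sf.card k =
              Sf.card + (Sf.card + 2 ^ Sf.card) + Bnd Sf.card k by ring,
              pow_add, pow_add, pow_add]
        _ = Bnd Sf.card (k + 1) := rfl
    · -- the encoding reflects `tau`
      intro x y
      constructor
      · intro h
        simp only [Prod.mk.injEq] at h
        obtain ⟨⟨e1, e2, e3⟩, e4⟩ := h
        rw [tau_succ_eq_iff]
        refine ⟨encS_inj (labelPlus_sub _ _) (labelPlus_sub _ _) e1,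
          encS_inj (labelDia_sub _ _) (labelDia_sub _ _) e2,
          enc2_inj (clSet_sub _ _) (clSet_sub _ _) e3, ?_⟩
        have key : ∀ a b : {w : M.W // ht M w < k + 1},
            ((fun c => @decide (∃ z : {w : M.W // ht M w < k}, M.Slt a.1 z.1 ∧ g z = c)
              (Classical.propDecidable _) : A → Bool) =
             (fun c => @decide (∃ z : {w : M.W // ht M w < k}, M.Slt b.1 z.1 ∧ g z = c)
              (Classical.propDecidable _))) →
            {t : TT k | ∃ x, M.Slt a.1 x ∧ tau M (↑Sf) k x = t} ⊆
              {t : TT k | ∃ x, M.Slt b.1 x ∧ tau M (↑Sf) k x = t} := by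
          rintro a b hab t ⟨z, haz, rfl⟩
          have hz : ht M z < k :=
            lt_of_lt_of_le (ht_lt hdepth haz) (Nat.lt_succ_iff.mp a.2)
          have h1 : ∃ z' : {w : M.W // ht M w < k}, M.Slt a.1 z'.1 ∧ g z' = g ⟨z, hz⟩ :=
            ⟨⟨z, hz⟩, haz, rfl⟩
          have h2 := (decide_eq_decide.mp (congrFun hab (g ⟨z, hz⟩))).mp h1
          obtain ⟨z', hbz', hgz'⟩ := h2
          exact ⟨z'.1, hbz', (hg z' ⟨z, hz⟩).mp hgz'⟩
        exact Set.Subset.antisymm (key x y e4) (key y x (e4.symm))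
      · intro h
        rw [tau_succ_eq_iff] at h
        obtain ⟨h1, h2, h3, h4⟩ := h
        have key : ∀ a b : {w : M.W // ht M w < k + 1},
            ({t : TT k | ∃ x, M.Slt a.1 x ∧ tau M (↑Sf) k x = t} =
              {t : TT k | ∃ x, M.Slt b.1 x ∧ tau M (↑Sf) k x = t}) →
            ∀ c : A, (∃ z : {w : M.W // ht M w < k}, M.Slt a.1 z.1 ∧ g z = c) →
              (∃ z : {w : M.W // ht M w < k}, M.Slt b.1 z.1 ∧ g z = c) := by
          rintro a b hab c ⟨z, haz, rfl⟩
          have hmem : tau M (↑Sf) k z.1 ∈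
              {t : TT k | ∃ x, M.Slt a.1 x ∧ tau M (↑Sf) k x = t} := ⟨z.1, haz, rfl⟩
          rw [hab] at hmem
          obtain ⟨u, hbu, hu⟩ := hmem
          have hukk : ht M u < k :=
            lt_of_lt_of_le (ht_lt hdepth hbu) (Nat.lt_succ_iff.mp b.2)
          exact ⟨⟨u, hukk⟩, hbu, (hg ⟨u, hukk⟩ z).mpr hu⟩
        simp only [Prod.mk.injEq]
        refine ⟨⟨congrArg (encS Sf) h1, congrArg (encS Sf) h2, congrArg (enc2 Sf) h3⟩, ?_⟩
        funext c
        exact decide_eq_decide.mpr ⟨key x y h4 c, key y x h4.symm c⟩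

/-! ### Arithmetic -/

lemma arith1 (s : ℕ) : 2 * s + 2 ^ s ≤ 2 ^ (2 * s) := by
  induction s with
  | zero => norm_num
  | succ s ih =>
    rcases Nat.eq_zero_or_pos s with rfl | hs
    · norm_num
    · have e1 : 2 ≤ 2 ^ (2 * s) := by
        calc (2 : ℕ) = 2 ^ 1 := rfl
          _ ≤ 2 ^ (2 * s) := Nat.pow_le_pow_right (by norm_num) (by omega)
      have e2 : 2 ^ s ≤ 2 ^ (2 * s) := Nat.pow_le_pow_right (by norm_num) (by omega)
      have h1 : 2 ^ (s + 1) = 2 * 2 ^ s := by rw [pow_succ]; ring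
      have h2 : 2 ^ (2 * (s + 1)) = 4 * 2 ^ (2 * s) := by
        rw [show 2 * (s + 1) = 2 * s + 2 by ring, pow_add]; ring
      rw [h1, h2]
      linarith

lemma arith3 (s : ℕ) (hs : 1 ≤ s) : 4 * (2 * s + 2 ^ s) ≤ 2 ^ (4 * s) := by
  induction s, hs using Nat.le_induction with
  | base => norm_num
  | succ s hs ih =>
    have h1 : 2 ^ (s + 1) = 2 * 2 ^ s := by rw [pow_succ]; ring
    have h2 : 2 ^ (4 * (s + 1)) = 16 * 2 ^ (4 * s) := by
      rw [show 4 * (s + 1) = 4 * s + 4 by ring, pow_add]; ring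
    rw [h1, h2]
    rw [h1] at *
    revert ih hs
    generalize 2 ^ s = x
    generalize 2 ^ (4 * s) = y
    intro hs ih
    omega

lemma arith4 (a : ℕ) (ha : 4 ≤ a) : 2 * a + 1 ≤ 2 ^ a := by
  induction a, ha using Nat.le_induction with
  | base => norm_num
  | succ a ha ih =>
    have h1 : 2 ^ (a + 1) = 2 * 2 ^ a := by rw [pow_succ]; ring
    have h2 : (2:ℕ) ≤ 2 ^ a := by
      calc (2 : ℕ) = 2 ^ 1 := rfl
        _ ≤ 2 ^ a := Nat.pow_le_pow_right (by norm_num) (by omega)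
    rw [h1]
    linarith

lemma iterExp_ge (m : ℕ) : ∀ k : ℕ, 2 ^ m ≤ iterExp m (k + 1) := by
  intro k
  induction k with
  | zero => exact le_refl _
  | succ k ih =>
    calc 2 ^ m ≤ iterExp m (k + 1) := ih
      _ ≤ 2 ^ iterExp m (k + 1) := Nat.le_of_lt Nat.lt_two_pow_self
      _ = iterExp m (k + 2) := rfl

lemma main_arith (s n : ℕ) (hs : 1 ≤ s) :
    Bnd s (n + 1) ≤ iterExp (2 * (n + 1) * s) (n + 2) := by
  cases n with
  | zero =>
    have h1 : Bnd s 1 = 2 ^ (2 * s + 2 ^ s) := by simp [Bnd]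
    have h2 : iterExp (2 * 1 * s) 2 = 2 ^ 2 ^ (2 * 1 * s) := rfl
    rw [h1, h2]
    refine Nat.pow_le_pow_right (by norm_num) ?_
    calc 2 * s + 2 ^ s ≤ 2 ^ (2 * s) := arith1 s
      _ ≤ 2 ^ (2 * 1 * s) := Nat.pow_le_pow_right (by norm_num) (by omega)
  | succ n' =>
    set m := 2 * (n' + 1 + 1) * s with hm
    have hms : 4 * s ≤ m := by
      calc 4 * s ≤ 2 * (n' + 1 + 1) * s := Nat.mul_le_mul_right s (by omega)
        _ = m := rfl
    have ha4 : 4 ≤ 2 * s + 2 ^ s := by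
      have : 2 ≤ 2 ^ s := by
        calc (2 : ℕ) = 2 ^ 1 := rfl
          _ ≤ 2 ^ s := Nat.pow_le_pow_right (by norm_num) hs
      omega
    have h4am : 4 * (2 * s + 2 ^ s) ≤ 2 ^ m :=
      le_trans (arith3 s hs) (Nat.pow_le_pow_right (by norm_num) hms)
    have hineq : ∀ k : ℕ, 2 * (2 * s + 2 ^ s) + Bnd s k ≤ iterExp m (k + 1) := by
      intro k
      induction k with
      | zero =>
        have h0 : Bnd s 0 = 0 := rfl
        have h1 : iterExp m 1 = 2 ^ m := rfl
        rw [h0, h1]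
        omega
      | succ k ihk =>
        have ht1 : 2 ^ m ≤ iterExp m (k + 1) := iterExp_ge m k
        have hB1 : 1 ≤ Bnd s (k + 1) := Nat.one_le_two_pow
        have hkey : Bnd s (k + 1) * 2 ^ (2 * s + 2 ^ s) ≤ 2 ^ iterExp m (k + 1) := by
          have : Bnd s (k + 1) * 2 ^ (2 * s + 2 ^ s) =
              2 ^ (2 * s + 2 ^ s + Bnd s k + (2 * s + 2 ^ s)) := by
            rw [pow_add 2 (2 * s + 2 ^ s + Bnd s k) (2 * s + 2 ^ s)]
            rfl
          rw [this]
          refine Nat.pow_le_pow_right (by norm_num) ?_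
          omega
        have h2a : 2 * (2 * s + 2 ^ s) + 1 ≤ 2 ^ (2 * s + 2 ^ s) := arith4 _ ha4
        have hstep : 2 * (2 * s + 2 ^ s) + Bnd s (k + 1) ≤ 2 ^ iterExp m (k + 1) := by
          calc 2 * (2 * s + 2 ^ s) + Bnd s (k + 1)
              ≤ (2 * (2 * s + 2 ^ s) + 1) * Bnd s (k + 1) := by nlinarith
            _ ≤ 2 ^ (2 * s + 2 ^ s) * Bnd s (k + 1) := Nat.mul_le_mul_right _ h2a
            _ = Bnd s (k + 1) * 2 ^ (2 * s + 2 ^ s) := by ring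
            _ ≤ 2 ^ iterExp m (k + 1) := hkey
        calc 2 * (2 * s + 2 ^ s) + Bnd s (k + 1) ≤ 2 ^ iterExp m (k + 1) := hstep
          _ = iterExp m (k + 2) := rfl
    have hfin : Bnd s (n' + 1 + 1) ≤ 2 ^ iterExp m (n' + 1 + 1) := by
      have : Bnd s (n' + 1 + 1) = 2 ^ (2 * s + 2 ^ s + Bnd s (n' + 1)) := rfl
      rw [this]
      refine Nat.pow_le_pow_right (by norm_num) ?_
      have := hineq (n' + 1)
      omega
    calc Bnd s (n' + 1 + 1) ≤ 2 ^ iterExp m (n' + 1 + 1) := hfin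
      _ = iterExp m (n' + 1 + 2) := rfl

end BisimAux

/-- **Bound on the number of bisimulation classes of a shallow model.** If `M`
is a bi-intuitionistic model of finite depth `n` and `Σ` is a finite set of
`L`-formulas with `|Σ| = s`, then the number of equivalence classes of the
greatest `Σ`-bisimulation `∼_Σ` on `M` is at most `2^{2(n+1)s}_{n+2}`. -/
theorem bisim_classes_bound (M : KModel.{u}) (hM : M.IsBiInt) (n : ℕ)
    (hdepth : M.DepthLE n) (S : Finset Fml) :
    Finite (Quot (M.GBisim ↑S)) ∧
    Nat.card (Quot (M.GBisim ↑S)) ≤ iterExp (2 * (n + 1) * S.card) (n + 2) := by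
  classical
  rcases Nat.eq_zero_or_pos S.card with hs | hs
  · -- trivial case: `S` is empty, so all worlds are bisimilar
    have hSe : S = ∅ := Finset.card_eq_zero.mp hs
    have htotal : ∀ w v : M.W, M.GBisim (↑S) w v := by
      intro w v
      refine ⟨fun _ _ => True, ⟨?_, ?_, ?_⟩, trivial⟩
      · intro w w' v _ _
        exact ⟨v, hM.1 v, trivial⟩
      · intro w v v' _ _
        exact ⟨w, hM.1 w, trivial⟩
      · intro w v _
        subst hSe
        constructor
        · ext φ; simp [KModel.labelPlus]
        · ext φ; simp [KModel.labelDia]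
    have hsub : Subsingleton (Quot (M.GBisim ↑S)) := by
      constructor
      intro a b
      induction a using Quot.ind with | _ w =>
      induction b using Quot.ind with | _ v =>
      exact Quot.sound (htotal w v)
    haveI := hsub
    refine ⟨Finite.of_subsingleton, ?_⟩
    have hle1 : Nat.card (Quot (M.GBisim ↑S)) ≤ 1 := by
      rcases isEmpty_or_nonempty (Quot (M.GBisim ↑S)) with he | hne
      · rw [Nat.card_of_isEmpty]; omega
      · rw [Nat.card_unique]
    have h1 : 1 ≤ iterExp (2 * (n + 1) * S.card) (n + 2) := by
      have : iterExp (2 * (n + 1) * S.card) (n + 2) =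
          2 ^ iterExp (2 * (n + 1) * S.card) (n + 1) := rfl
      rw [this]
      exact Nat.one_le_two_pow
    omega
  · -- main case
    obtain ⟨A, instA, g, hcard, hg⟩ := BisimAux.tau_count (M := M) hdepth S (n + 1)
    letI := instA
    set G : M.W → A := fun w =>
      g ⟨w, Nat.lt_succ_of_le (BisimAux.ht_le hdepth w)⟩ with hG
    have hbis := BisimAux.tau_isBisim (M := M) hM hdepth (↑S : Set Fml)
    let F : Set.range G → Quot (M.GBisim ↑S) := fun t => Quot.mk _ t.2.choose
    have hFsurj : Function.Surjective F := by
      intro q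
      induction q using Quot.ind with | _ w =>
      refine ⟨⟨G w, w, rfl⟩, ?_⟩
      apply Quot.sound
      have hspec : G (⟨G w, ⟨w, rfl⟩⟩ : Set.range G).2.choose = G w :=
        (⟨G w, ⟨w, rfl⟩⟩ : Set.range G).2.choose_spec
      exact ⟨_, hbis, (hg _ _).mp hspec⟩
    haveI : Finite A := Finite.of_fintype A
    haveI : Finite (Set.range G) := Subtype.finite
    haveI hFin : Finite (Quot (M.GBisim ↑S)) := Finite.of_surjective F hFsurj
    refine ⟨hFin, ?_⟩
    calc Nat.card (Quot (M.GBisim ↑S)) ≤ Nat.card (Set.range G) :=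
          Nat.card_le_card_of_surjective F hFsurj
      _ ≤ Nat.card A :=
          Nat.card_le_card_of_injective Subtype.val Subtype.val_injective
      _ = Fintype.card A := Nat.card_eq_fintype_card
      _ ≤ BisimAux.Bnd S.card (n + 1) := hcard
      _ ≤ iterExp (2 * (n + 1) * S.card) (n + 2) := BisimAux.main_arith S.card n hs
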